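/- Suppose a > -2 and |f_j| ≤ B·ρ^{-j} for all j ≥ 2, where B, ρ > 0. If the solution m_k = (-1)^k Γ(k+a) Σ_{j=2}^k (-1)^j f_j/Γ(j+a) of the recursion m_k + (k-1+a)m_{k-1} = f_k satisfies S_∞ := Σ_{j=2}^∞ (-1)^j f_j/Γ(j+a) = 0, then there exist constants C > 0 and k_0 such that |m_k| ≤ C·ρ^{-k} for all k ≥ k_0; in particular the power series Σ m_k x^k converges absolutely for |x| < ρ. -/

import Mathlib

open Finset Filter

private lemma gamma_ratio (x : ℝ) (hx : 1 ≤ x) :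
    ∀ n : ℕ, Real.Gamma x * x ^ n ≤ Real.Gamma (x + n) := by
  intro n
  induction n with
  | zero => simp
  | succ n ih =>
    have hxn : (1:ℝ) ≤ x + n := by
      have : (0:ℝ) ≤ n := Nat.cast_nonneg n
      linarith
    have hne : x + (n:ℝ) ≠ 0 := by linarith
    have h1 : Real.Gamma (x + (n+1:ℕ)) = (x + n) * Real.Gamma (x + n) := by
      push_cast
      rw [show x + ((n:ℝ) + 1) = (x + n) + 1 by ring, Real.Gamma_add_one hne]
    have hΓpos : 0 < Real.Gamma (x + n) := Real.Gamma_pos_of_pos (by linarith)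
    have hΓxpos : 0 < Real.Gamma x := Real.Gamma_pos_of_pos (by linarith)
    have hxpow : (0:ℝ) ≤ Real.Gamma x * x ^ n := by positivity
    calc Real.Gamma x * x ^ (n+1) = x * (Real.Gamma x * x ^ n) := by ring
      _ ≤ x * Real.Gamma (x + n) := by
          exact mul_le_mul_of_nonneg_left ih (by linarith)
      _ ≤ (x + n) * Real.Gamma (x + n) := by
          have : (0:ℝ) ≤ n := Nat.cast_nonneg n
          nlinarith
      _ = Real.Gamma (x + (n+1:ℕ)) := h1.symm

set_option maxHeartbeats 1000000 in
/-- If `a > -2`, `|f_j| ≤ B ρ^{-j}` and `S_∞ = Σ_{j≥2} (-1)^j f_j/Γ(j+a) = 0`, then the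
coefficients `m_k = (-1)^k Γ(k+a) S_k` are eventually bounded by `C ρ^{-k}` and the
power series `Σ m_k x^k` converges absolutely for `|x| < ρ`. -/
theorem stmt1 (a : ℝ) (ha : -2 < a) (B ρ : ℝ) (hB : 0 < B) (hρ : 0 < ρ)
    (f : ℕ → ℝ) (hf : ∀ j, 2 ≤ j → |f j| ≤ B / ρ ^ j)
    (m : ℕ → ℝ)
    (hm : ∀ k, m k = (-1 : ℝ) ^ k * Real.Gamma ((k : ℝ) + a) *
      ∑ j ∈ Finset.Icc 2 k, (-1 : ℝ) ^ j * f j / Real.Gamma ((j : ℝ) + a))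
    (hS : (∑' j : ℕ, if 2 ≤ j then (-1 : ℝ) ^ j * f j / Real.Gamma ((j : ℝ) + a) else 0) = 0) :
    (∃ C > (0 : ℝ), ∃ k₀ : ℕ, ∀ k, k₀ ≤ k → |m k| ≤ C / ρ ^ k) ∧
    ∀ x : ℝ, |x| < ρ → Summable (fun k : ℕ => |m k * x ^ k|) := by
  set g : ℕ → ℝ := fun j => if 2 ≤ j then (-1 : ℝ) ^ j * f j / Real.Gamma ((j : ℝ) + a) else 0
    with hg
  have hΓpos : ∀ j : ℕ, 2 ≤ j → 0 < Real.Gamma ((j : ℝ) + a) := by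
    intro j hj
    apply Real.Gamma_pos_of_pos
    have : (2:ℝ) ≤ j := by exact_mod_cast hj
    linarith
  -- summability of g
  have hgabs : ∀ j : ℕ, 2 ≤ j → |g j| ≤ B / ρ ^ j / Real.Gamma ((j : ℝ) + a) := by
    intro j hj
    have hΓ := hΓpos j hj
    simp only [hg, if_pos hj]
    rw [abs_div, abs_mul, abs_pow, abs_neg, abs_one, one_pow, one_mul, abs_of_pos hΓ]
    gcongr
    exact hf j hj
  have hvsum : Summable (fun n : ℕ => B / ρ ^ (n+2) / Real.Gamma ((n:ℝ) + 2 + a)) := by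
    apply summable_of_ratio_norm_eventually_le (r := 1/2) (by norm_num)
    filter_upwards [eventually_ge_atTop ⌈2/ρ⌉₊] with n hn
    have hna : (0:ℝ) < (n:ℝ) + 2 + a := by
      have : (0:ℝ) ≤ n := Nat.cast_nonneg n
      linarith
    have hΓn : 0 < Real.Gamma ((n:ℝ) + 2 + a) := Real.Gamma_pos_of_pos hna
    have hΓn1 : Real.Gamma ((↑(n+1):ℝ) + 2 + a) = ((n:ℝ) + 2 + a) * Real.Gamma ((n:ℝ) + 2 + a) := by
      push_cast
      rw [show (n:ℝ) + 1 + 2 + a = ((n:ℝ) + 2 + a) + 1 by ring, Real.Gamma_add_one (ne_of_gt hna)]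
    have hratio : ρ * ((n:ℝ) + 2 + a) ≥ 2 := by
      have h1 : (2/ρ : ℝ) ≤ ⌈2/ρ⌉₊ := Nat.le_ceil _
      have h2 : ((⌈2/ρ⌉₊ : ℕ) : ℝ) ≤ n := by exact_mod_cast hn
      have h3 : 2/ρ ≤ (n:ℝ) + 2 + a := by linarith
      calc (2:ℝ) = ρ * (2/ρ) := by field_simp
        _ ≤ ρ * ((n:ℝ) + 2 + a) := by exact mul_le_mul_of_nonneg_left h3 hρ.le
    have hpos : 0 < B / ρ ^ (n+2) / Real.Gamma ((n:ℝ) + 2 + a) := by positivity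
    have heq : B / ρ ^ (n+1+2) / Real.Gamma ((↑(n+1):ℝ) + 2 + a)
        = (B / ρ ^ (n+2) / Real.Gamma ((n:ℝ)+2+a)) * (ρ * ((n:ℝ)+2+a))⁻¹ := by
      rw [hΓn1, show n+1+2 = (n+2)+1 by ring, pow_succ]
      field_simp
    have hinvle : (ρ * ((n:ℝ)+2+a))⁻¹ ≤ 1/2 := by
      rw [inv_le_comm₀ (by nlinarith) (by norm_num)]
      norm_num
      linarith
    rw [Real.norm_eq_abs, Real.norm_eq_abs, abs_of_pos hpos, heq,
      abs_of_pos (mul_pos hpos (inv_pos.2 (by nlinarith)))]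
    calc (B / ρ ^ (n+2) / Real.Gamma ((n:ℝ)+2+a)) * (ρ * ((n:ℝ)+2+a))⁻¹
        ≤ (B / ρ ^ (n+2) / Real.Gamma ((n:ℝ)+2+a)) * (1/2) :=
          mul_le_mul_of_nonneg_left hinvle hpos.le
      _ = 1/2 * (B / ρ ^ (n+2) / Real.Gamma ((n:ℝ)+2+a)) := by ring
  have hsum : Summable g := by
    rw [← summable_nat_add_iff 2]
    apply Summable.of_norm_bounded hvsum
    intro n
    rw [Real.norm_eq_abs]
    have := hgabs (n+2) (by omega)
    convert this using 3 <;> push_cast <;> ring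
  -- partial sums equal minus tails
  have hpart : ∀ k : ℕ, ∑ j ∈ Finset.Icc 2 k, (-1 : ℝ) ^ j * f j / Real.Gamma ((j : ℝ) + a)
      = ∑ j ∈ Finset.range (k+1), g j := by
    intro k
    rw [hg]
    rw [← Finset.sum_filter]
    congr 1
    ext j
    simp only [Finset.mem_Icc, Finset.mem_filter, Finset.mem_range]
    omega
  have htail : ∀ k : ℕ, ∑ j ∈ Finset.range (k+1), g j = - ∑' j : ℕ, g (j + (k+1)) := by
    intro k
    have := Summable.sum_add_tsum_nat_add (f := g) (k+1) hsum
    rw [hS] at this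
    linarith
  -- choose k₀
  set k₀ : ℕ := ⌈1 - a⌉₊ + ⌈2/ρ⌉₊ + 1 with hk₀
  have hkey : ∀ k : ℕ, k₀ ≤ k → |m k| ≤ B / ρ ^ k := by
    intro k hk
    have hkn : ⌈1 - a⌉₊ + ⌈2/ρ⌉₊ + 1 ≤ k := by omega
    have hknR : ((⌈1-a⌉₊ : ℕ):ℝ) + ((⌈2/ρ⌉₊ : ℕ):ℝ) + 1 ≤ (k:ℝ) := by exact_mod_cast hkn
    have hce1 : (1 - a : ℝ) ≤ ⌈1-a⌉₊ := Nat.le_ceil _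
    have hce2 : (2/ρ : ℝ) ≤ ⌈2/ρ⌉₊ := Nat.le_ceil _
    have hρ2 : (0:ℝ) < 2/ρ := by positivity
    have hk1 : (1:ℝ) ≤ (k:ℝ) + a := by linarith
    have hkρ : 2 ≤ ρ * ((k:ℝ) + a) := by
      have h4 : (2/ρ : ℝ) ≤ (k:ℝ) + a := by linarith
      calc (2:ℝ) = ρ * (2/ρ) := by field_simp
        _ ≤ ρ * ((k:ℝ) + a) := mul_le_mul_of_nonneg_left h4 hρ.le
    set c : ℝ := (ρ * ((k:ℝ) + a))⁻¹ with hc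
    have hcpos : 0 < c := by
      rw [hc]; apply inv_pos.2; nlinarith
    have hc2 : c ≤ 1/2 := by
      rw [hc]
      rw [inv_le_comm₀ (by nlinarith) (by norm_num)]
      linarith
    have hΓk : 0 < Real.Gamma ((k:ℝ) + a) := Real.Gamma_pos_of_pos (by linarith)
    -- termwise bound
    have hterm : ∀ j : ℕ, Real.Gamma ((k:ℝ) + a) * |g (j + (k+1))| ≤ (B / ρ ^ k) * c ^ (j+1) := by
      intro j
      have hjk : 2 ≤ j + (k+1) := by omega
      have hΓj : 0 < Real.Gamma ((↑(j + (k+1)):ℝ) + a) := hΓpos _ hjk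
      have hgr := gamma_ratio ((k:ℝ) + a) hk1 (j+1)
      have hcast : ((k:ℝ) + a) + ((j+1:ℕ):ℝ) = (↑(j + (k+1)):ℝ) + a := by push_cast; ring
      rw [hcast] at hgr
      have hgb := hgabs _ hjk
      have h1 : Real.Gamma ((k:ℝ) + a) * |g (j + (k+1))|
          ≤ Real.Gamma ((k:ℝ) + a) * (B / ρ ^ (j+(k+1)) / Real.Gamma ((↑(j + (k+1)):ℝ) + a)) :=
        mul_le_mul_of_nonneg_left hgb hΓk.le
      have h2 : Real.Gamma ((k:ℝ) + a) * (B / ρ ^ (j+(k+1)) / Real.Gamma ((↑(j + (k+1)):ℝ) + a))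
          ≤ (B / ρ ^ k) * c ^ (j+1) := by
        have hpow : ρ ^ (j+(k+1)) = ρ ^ k * ρ ^ (j+1) := by
          rw [← pow_add]; congr 1; omega
        have hka : (0:ℝ) < (k:ℝ) + a := by linarith
        have hrw : (B / ρ ^ k) * c ^ (j+1) = B / (ρ ^ (j+(k+1)) * ((k:ℝ)+a) ^ (j+1)) := by
          rw [hc, hpow]
          rw [mul_inv, mul_pow, inv_pow, inv_pow]
          field_simp
        have hLHS : Real.Gamma ((k:ℝ)+a) * (B / ρ ^ (j+(k+1)) / Real.Gamma ((↑(j + (k+1)):ℝ) + a))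
            = (Real.Gamma ((k:ℝ)+a) * B) / (ρ ^ (j+(k+1)) * Real.Gamma ((↑(j + (k+1)):ℝ) + a)) := by
          field_simp
        rw [hLHS, hrw, div_le_div_iff₀ (by positivity) (by positivity)]
        nlinarith [mul_le_mul_of_nonneg_left hgr (show (0:ℝ) ≤ B * ρ ^ (j+(k+1)) by positivity)]
      calc Real.Gamma ((k:ℝ) + a) * |g (j + (k+1))|
          ≤ Real.Gamma ((k:ℝ) + a) * (B / ρ ^ (j+(k+1)) / Real.Gamma ((↑(j + (k+1)):ℝ) + a)) := h1
        _ ≤ (B / ρ ^ k) * c ^ (j+1) := h2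
    -- summabilities
    have hsum_shift : Summable (fun j : ℕ => g (j + (k+1))) := (summable_nat_add_iff (k+1)).2 hsum
    have hsum_abs : Summable (fun j : ℕ => |g (j + (k+1))|) := hsum_shift.abs
    have hgeo : Summable (fun j : ℕ => (B / ρ ^ k) * c ^ (j+1)) := by
      have : Summable (fun j : ℕ => c ^ j) := summable_geometric_of_lt_one hcpos.le (by linarith)
      exact ((this.mul_left c).congr (fun j => by rw [← pow_succ'])).mul_left _
    -- assemble
    have hmk : |m k| = Real.Gamma ((k:ℝ) + a) * |∑' j : ℕ, g (j + (k+1))| := by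
      rw [hm k, hpart k, htail k]
      rw [abs_mul, abs_mul, abs_pow, abs_neg, abs_one, one_pow, one_mul,
        abs_of_pos hΓk, abs_neg]
    rw [hmk]
    have h3 : |∑' j : ℕ, g (j + (k+1))| ≤ ∑' j : ℕ, |g (j + (k+1))| := by
      simpa [Real.norm_eq_abs] using
        norm_tsum_le_tsum_norm (f := fun j : ℕ => g (j + (k+1)))
          (by simpa [Real.norm_eq_abs] using hsum_abs)
    have h4 : Real.Gamma ((k:ℝ) + a) * |∑' j : ℕ, g (j + (k+1))|
        ≤ ∑' j : ℕ, Real.Gamma ((k:ℝ) + a) * |g (j + (k+1))| := by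
      rw [tsum_mul_left]
      exact mul_le_mul_of_nonneg_left h3 hΓk.le
    have h5 : ∑' j : ℕ, Real.Gamma ((k:ℝ) + a) * |g (j + (k+1))|
        ≤ ∑' j : ℕ, (B / ρ ^ k) * c ^ (j+1) :=
      Summable.tsum_le_tsum hterm (hsum_abs.mul_left _) hgeo
    have h6 : ∑' j : ℕ, (B / ρ ^ k) * c ^ (j+1) ≤ B / ρ ^ k := by
      have hgs : ∑' j : ℕ, c ^ j = (1 - c)⁻¹ :=
        tsum_geometric_of_lt_one hcpos.le (by linarith)
      have : ∑' j : ℕ, (B / ρ ^ k) * c ^ (j+1) = (B / ρ ^ k) * (c * (1-c)⁻¹) := by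
        rw [tsum_mul_left]
        congr 1
        rw [← hgs, ← tsum_mul_left]
        exact tsum_congr fun j => by rw [← pow_succ']
      rw [this]
      have hc1 : c * (1-c)⁻¹ ≤ 1 := by
        have h1c : (0:ℝ) < 1 - c := by linarith
        have hinv : (1-c)⁻¹ ≤ 2 := by
          rw [inv_le_comm₀ h1c (by norm_num)]
          norm_num
          linarith
        calc c * (1-c)⁻¹ ≤ c * 2 := mul_le_mul_of_nonneg_left hinv hcpos.le
          _ ≤ 1 := by linarith
      calc (B / ρ ^ k) * (c * (1-c)⁻¹) ≤ (B / ρ ^ k) * 1 :=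
            mul_le_mul_of_nonneg_left hc1 (by positivity)
        _ = B / ρ ^ k := mul_one _
    linarith
  refine ⟨⟨B, hB, k₀, hkey⟩, ?_⟩
  intro x hx
  rw [← summable_nat_add_iff k₀]
  have hxρ : |x| / ρ < 1 := (div_lt_one hρ).2 hx
  have hgeo : Summable (fun k : ℕ => (B * (|x|/ρ) ^ k₀) * (|x|/ρ) ^ k) :=
    (summable_geometric_of_lt_one (by positivity) hxρ).mul_left _
  apply Summable.of_nonneg_of_le (fun k => abs_nonneg _) _ hgeo
  intro k
  rw [abs_mul, abs_pow]
  have h1 := hkey (k + k₀) (by omega)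
  have h2 : |x| ^ (k+k₀) ≥ 0 := by positivity
  calc |m (k+k₀)| * |x| ^ (k+k₀) ≤ (B / ρ ^ (k+k₀)) * |x| ^ (k+k₀) :=
        mul_le_mul_of_nonneg_right h1 h2
    _ = (B * (|x|/ρ) ^ k₀) * (|x|/ρ) ^ k := by
        rw [div_pow, pow_add, pow_add]
        field_simp
        rw [div_pow, mul_comm (ρ ^ k), mul_assoc, ← mul_div_assoc,
          mul_div_right_comm, div_self (pow_ne_zero k hρ.ne'), one_mul, ← pow_add, add_comm]
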